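/- For any vector a in (ℤ/dℤ)^n, there exists an invertible n×n matrix L over ℤ/dℤ and a scalar k in ℤ/dℤ such that L·a = k·e₁, where e₁ is the first standard basis vector. -/

import Mathlib

lemma tv_mulVec {m : ℕ} (i j : Fin m) (c : ℤ) (a : Fin m → ℤ) :
    (Matrix.transvection i j c).mulVec a = Function.update a i (a i + c * a j) := by
  funext k
  simp only [Matrix.transvection, Matrix.add_mulVec, Matrix.one_mulVec, Pi.add_apply]
  rcases eq_or_ne k i with rfl | hk
  · simp [Matrix.mulVec, dotProduct, Matrix.single, Finset.sum_ite_eq]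
  · simp [Matrix.mulVec, dotProduct, Matrix.single, Function.update_of_ne hk,
      Ne.symm hk]

lemma base {m : ℕ} (a : Fin (m+1) → ℤ) (h : ∀ i : Fin m, a i.succ = 0) :
    ∃ (L : Matrix (Fin (m+1)) (Fin (m+1)) ℤ) (k : ℤ),
      IsUnit L.det ∧ L.mulVec a = Pi.single 0 k :=
  ⟨1, a 0, by simp, by
    funext i
    rw [Matrix.one_mulVec]
    refine Fin.cases ?_ ?_ i
    · simp
    · intro j; simp [h j, Pi.single_eq_of_ne (Fin.succ_ne_zero j)]⟩

lemma compose {m : ℕ} {a a' : Fin (m+1) → ℤ} (T : Matrix (Fin (m+1)) (Fin (m+1)) ℤ)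
    (hT : IsUnit T.det) (hTa : T.mulVec a = a')
    (h : ∃ (L : Matrix (Fin (m+1)) (Fin (m+1)) ℤ) (k : ℤ),
      IsUnit L.det ∧ L.mulVec a' = Pi.single 0 k) :
    ∃ (L : Matrix (Fin (m+1)) (Fin (m+1)) ℤ) (k : ℤ),
      IsUnit L.det ∧ L.mulVec a = Pi.single 0 k := by
  obtain ⟨L, k, hL, hLa⟩ := h
  exact ⟨L * T, k, by rw [Matrix.det_mul]; exact hL.mul hT, by
    rw [← Matrix.mulVec_mulVec, hTa, hLa]⟩

lemma tail_sum_update {m : ℕ} (a : Fin (m+1) → ℤ) (j : Fin m) (v : ℤ) :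
    (∑ i : Fin m, ((Function.update a j.succ v) i.succ).natAbs) + (a j.succ).natAbs
      = (∑ i : Fin m, (a i.succ).natAbs) + v.natAbs := by
  have h1 : (fun i : Fin m => ((Function.update a j.succ v) i.succ).natAbs)
      = Function.update (fun i : Fin m => (a i.succ).natAbs) j v.natAbs := by
    funext i
    rcases eq_or_ne i j with rfl | h
    · simp
    · rw [Function.update_of_ne (fun hh => h (Fin.succ_injective _ hh)),
        Function.update_of_ne h]
  rw [h1, Finset.sum_update_of_mem (Finset.mem_univ j),
    ← Finset.add_sum_erase _ _ (Finset.mem_univ j)]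
  simp only [Finset.erase_eq]
  omega

lemma aux (m : ℕ) : ∀ t s (a : Fin (m+1) → ℤ),
    (∑ i : Fin m, (a i.succ).natAbs) ≤ t → (a 0).natAbs ≤ s →
    ∃ (L : Matrix (Fin (m+1)) (Fin (m+1)) ℤ) (k : ℤ),
      IsUnit L.det ∧ L.mulVec a = Pi.single 0 k := by
  intro t
  induction t with
  | zero =>
    intro s a ht _
    refine base a fun i => ?_
    exact Int.natAbs_eq_zero.mp
      (Finset.sum_eq_zero_iff.mp (Nat.le_zero.mp ht) i (Finset.mem_univ i))
  | succ t iht =>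
    intro s
    induction s with
    | zero =>
      intro a ht hs
      have hb : a 0 = 0 := Int.natAbs_eq_zero.mp (Nat.le_zero.mp hs)
      by_cases hz : ∀ i : Fin m, a i.succ = 0
      · exact base a hz
      · push_neg at hz
        obtain ⟨j, hj⟩ := hz
        -- combined: a0 ← a j.succ, then a j.succ ← 0
        set a1 := Function.update a 0 (a j.succ) with ha1
        have hT1 : (Matrix.transvection 0 j.succ (1:ℤ)).mulVec a = a1 := by
          rw [tv_mulVec, hb]; ring_nf; exact ha1.symm
        have h10 : a1 0 = a j.succ := by simp [ha1]
        have h1j : a1 j.succ = a j.succ := by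
          simp [ha1, Function.update_of_ne (Fin.succ_ne_zero j)]
        set a2 := Function.update a1 j.succ 0 with ha2
        have hT2 : (Matrix.transvection j.succ 0 (-1:ℤ)).mulVec a1 = a2 := by
          rw [tv_mulVec, h10, h1j]; ring_nf; exact ha2.symm
        refine compose _ (by rw [Matrix.det_transvection_of_ne _ _ (Fin.succ_ne_zero j).symm]; exact isUnit_one) hT1 ?_
        refine compose _ (by rw [Matrix.det_transvection_of_ne _ _ (Fin.succ_ne_zero j)]; exact isUnit_one) hT2 ?_
        refine iht (a2 0).natAbs a2 ?_ le_rfl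
        have hsum := tail_sum_update a1 j 0
        have htails : (∑ i : Fin m, (a1 i.succ).natAbs) = ∑ i : Fin m, (a i.succ).natAbs := by
          refine Finset.sum_congr rfl fun i _ => ?_
          rw [ha1, Function.update_of_ne (Fin.succ_ne_zero i)]
        rw [← ha2, htails, h1j] at hsum
        have : 1 ≤ (a j.succ).natAbs := by
          rcases Nat.eq_zero_or_pos (a j.succ).natAbs with h | h
          · exact absurd (Int.natAbs_eq_zero.mp h) hj
          · exact h
        omega
    | succ s ihs =>
      intro a ht hs
      by_cases hz : ∀ i : Fin m, a i.succ = 0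
      · exact base a hz
      · push_neg at hz
        obtain ⟨j, hj⟩ := hz
        by_cases hb : a 0 = 0
        · -- reuse: reduce s bound to 0
          exact ihs a ht (by rw [hb]; simp)
        · by_cases hle : (a j.succ).natAbs ≤ (a 0).natAbs
          · -- reduce a 0 mod a j.succ
            set r := a 0 % a j.succ with hr
            set a1 := Function.update a 0 r with ha1
            have hT : (Matrix.transvection 0 j.succ (-(a 0 / a j.succ))).mulVec a = a1 := by
              rw [tv_mulVec, ha1, hr, Int.emod_def]; ring_nf
            refine compose _ (by rw [Matrix.det_transvection_of_ne _ _ (Fin.succ_ne_zero j).symm]; exact isUnit_one) hT ?_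
            refine ihs a1 ?_ ?_
            · refine le_trans (le_of_eq (Finset.sum_congr rfl fun i _ => ?_)) ht
              rw [ha1, Function.update_of_ne (Fin.succ_ne_zero i)]
            · have h1 : 0 ≤ r := Int.emod_nonneg _ hj
              have h2 : r < |a j.succ| := Int.emod_lt_abs _ hj
              have h3 : r.natAbs < (a j.succ).natAbs := by
                have := Int.natAbs_lt_natAbs_of_nonneg_of_lt h1 h2
                rwa [Int.natAbs_abs] at this
              have : a1 0 = r := by simp [ha1]
              rw [this]; omega
          · -- reduce a j.succ mod a 0
            push_neg at hle
            set r := a j.succ % a 0 with hr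
            set a1 := Function.update a j.succ r with ha1
            have hT : (Matrix.transvection j.succ 0 (-(a j.succ / a 0))).mulVec a = a1 := by
              rw [tv_mulVec, ha1, hr, Int.emod_def]; ring_nf
            refine compose _ (by rw [Matrix.det_transvection_of_ne _ _ (Fin.succ_ne_zero j)]; exact isUnit_one) hT ?_
            refine iht (a1 0).natAbs a1 ?_ le_rfl
            have hsum := tail_sum_update a j r
            have h1 : 0 ≤ r := Int.emod_nonneg _ hb
            have h2 : r < |a 0| := Int.emod_lt_abs _ hb
            have h3 : r.natAbs < (a 0).natAbs := by
              have := Int.natAbs_lt_natAbs_of_nonneg_of_lt h1 h2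
              rwa [Int.natAbs_abs] at this
            rw [← ha1] at hsum
            omega

theorem stmt_0 (d n : ℕ) (hd : 2 ≤ d) (hn : 1 ≤ n) (a : Fin n → ZMod d) :
    ∃ (L : Matrix (Fin n) (Fin n) (ZMod d)) (k : ZMod d),
      IsUnit L.det ∧ L.mulVec a = Pi.single (⟨0, hn⟩ : Fin n) k := by
  haveI : NeZero d := ⟨by omega⟩
  obtain ⟨m, rfl⟩ : ∃ m, n = m + 1 := ⟨n - 1, by omega⟩
  set A : Fin (m+1) → ℤ := fun i => ((a i).val : ℤ) with hA
  obtain ⟨L, k, hL, hLa⟩ := aux m (∑ i : Fin m, (A i.succ).natAbs) (A 0).natAbs A le_rfl le_rfl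
  set φ : ℤ →+* ZMod d := Int.castRingHom (ZMod d) with hφ
  refine ⟨L.map φ, φ k, ?_, ?_⟩
  · rw [← RingHom.mapMatrix_apply, ← RingHom.map_det]; exact hL.map φ
  · have hAa : ∀ i, φ (A i) = a i := by
      intro i; simp [hA, hφ, ZMod.natCast_val, ZMod.cast_id]
    funext i
    have : (L.map φ).mulVec a i = φ (L.mulVec A i) := by
      simp only [Matrix.mulVec, dotProduct, Matrix.map_apply, map_sum, map_mul]
      exact Finset.sum_congr rfl fun l _ => by rw [hAa l]
    rw [this, hLa]
    have h0 : (⟨0, hn⟩ : Fin (m+1)) = 0 := rfl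
    rw [h0]
    rcases eq_or_ne i 0 with rfl | hi
    · simp
    · simp [Pi.single_eq_of_ne hi]
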